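/- Let λ₁ = π² and u₁(x) = sin(πx). The linear operator L: (H² ∩ H¹₀(0,1)) × ℝ → L²(0,1) × ℝ given by L(u, μ) = (u'' + λ₁ u + μ u₁, ⟨u₁', u'⟩_{L²}) is a bijection (bounded with bounded inverse). -/

import Mathlib

open Real Set MeasureTheory intervalIntegral

namespace S13

lemma hds (x : ℝ) : HasDerivAt (fun y => Real.sin (π * y)) (π * Real.cos (π * x)) x := by
  simpa [mul_comm] using ((hasDerivAt_id x).const_mul π).sin

lemma hdc (x : ℝ) : HasDerivAt (fun y => Real.cos (π * y)) (-(π * Real.sin (π * x))) x := by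
  simpa [mul_comm] using ((hasDerivAt_id x).const_mul π).cos

lemma deriv_sinpi : (deriv fun y => Real.sin (π * y)) = fun x => π * Real.cos (π * x) :=
  funext fun x => (hds x).deriv

lemma cont_sin : Continuous fun y => Real.sin (π * y) := by fun_prop
lemma cont_cos : Continuous fun y => Real.cos (π * y) := by fun_prop

lemma h2aux (x : ℝ) :
    HasDerivAt (fun y : ℝ => Real.sin (2 * (π * y))) (Real.cos (2 * (π * x)) * (2 * π)) x := by
  have := ((hasDerivAt_id x).const_mul (2 * π)).sin
  simpa [mul_assoc] using this

lemma int_sin_sq : (∫ x in (0:ℝ)..1, Real.sin (π * x) ^ 2) = 1 / 2 := by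
  have h : ∀ x ∈ uIcc (0:ℝ) 1,
      HasDerivAt (fun y => y / 2 - Real.sin (2 * (π * y)) / (4 * π)) (Real.sin (π * x) ^ 2) x := by
    intro x _
    have h1 : HasDerivAt (fun y : ℝ => y / 2) (1 / 2) x := (hasDerivAt_id x).div_const 2
    have := h1.sub ((h2aux x).div_const (4 * π))
    refine this.congr_deriv ?_
    have hc : Real.cos (2 * (π * x)) = Real.cos (π * x) ^ 2 - Real.sin (π * x) ^ 2 :=
      Real.cos_two_mul' _
    have hs : Real.sin (π * x) ^ 2 + Real.cos (π * x) ^ 2 = 1 := Real.sin_sq_add_cos_sq _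
    have hπ : π ≠ 0 := Real.pi_ne_zero
    rw [hc]
    field_simp
    nlinarith [hs, Real.pi_pos]
  have := integral_eq_sub_of_hasDerivAt h ((cont_sin.pow 2).intervalIntegrable 0 1)
  rw [this]
  norm_num [Real.sin_two_pi]

lemma int_cos_sq : (∫ x in (0:ℝ)..1, Real.cos (π * x) ^ 2) = 1 / 2 := by
  have h : ∀ x ∈ uIcc (0:ℝ) 1,
      HasDerivAt (fun y => y / 2 + Real.sin (2 * (π * y)) / (4 * π)) (Real.cos (π * x) ^ 2) x := by
    intro x _
    have h1 : HasDerivAt (fun y : ℝ => y / 2) (1 / 2) x := (hasDerivAt_id x).div_const 2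
    have := h1.add ((h2aux x).div_const (4 * π))
    refine this.congr_deriv ?_
    have hc : Real.cos (2 * (π * x)) = Real.cos (π * x) ^ 2 - Real.sin (π * x) ^ 2 :=
      Real.cos_two_mul' _
    have hs : Real.sin (π * x) ^ 2 + Real.cos (π * x) ^ 2 = 1 := Real.sin_sq_add_cos_sq _
    have hπ : π ≠ 0 := Real.pi_ne_zero
    rw [hc]
    field_simp
    nlinarith [hs, Real.pi_pos]
  have := integral_eq_sub_of_hasDerivAt h ((cont_cos.pow 2).intervalIntegrable 0 1)
  rw [this]
  norm_num [Real.sin_two_pi]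

lemma ftc1 {h : ℝ → ℝ} (hc : Continuous h) (x : ℝ) :
    HasDerivAt (fun y => ∫ t in (0:ℝ)..y, h t) (h x) x :=
  integral_hasDerivAt_right (hc.intervalIntegrable 0 x)
    (hc.stronglyMeasurableAtFilter _ _) hc.continuousAt

lemma uniq (w : ℝ → ℝ) (ν : ℝ) (hw : ContDiff ℝ 2 w) (h0 : w 0 = 0) (h1 : w 1 = 0)
    (hode : ∀ x ∈ Ioo (0:ℝ) 1,
      deriv (deriv w) x + π ^ 2 * w x + ν * Real.sin (π * x) = 0)
    (hint : (∫ x in (0:ℝ)..1, (π * Real.cos (π * x)) * deriv w x) = 0) :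
    ν = 0 ∧ ∀ x ∈ Icc (0:ℝ) 1, w x = 0 := by
  have hwd : Differentiable ℝ w := hw.differentiable (by norm_num)
  have hw1 : ContDiff ℝ 1 (deriv w) := by
    have h2 : ContDiff ℝ ((1 : ℕ) + 1) w := by exact_mod_cast hw
    exact (contDiff_succ_iff_deriv.mp h2).2.2
  have hwd' : Differentiable ℝ (deriv w) := hw1.differentiable one_ne_zero
  have hcw : Continuous w := hwd.continuous
  have hcw' : Continuous (deriv w) := hwd'.continuous
  have hcw'' : Continuous (deriv (deriv w)) := hw1.continuous_deriv le_rfl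
  have hodeI : ∀ x ∈ Icc (0:ℝ) 1,
      deriv (deriv w) x + π ^ 2 * w x + ν * Real.sin (π * x) = 0 := by
    have hcont : Continuous fun x =>
        deriv (deriv w) x + π ^ 2 * w x + ν * Real.sin (π * x) := by fun_prop
    have hcl : Set.EqOn (fun x => deriv (deriv w) x + π ^ 2 * w x + ν * Real.sin (π * x))
        (fun _ => (0:ℝ)) (closure (Ioo (0:ℝ) 1)) :=
      Set.EqOn.closure (fun x hx => hode x hx) hcont continuous_const
    intro x hx
    have : x ∈ closure (Ioo (0:ℝ) 1) := by
      rw [closure_Ioo (by norm_num : (0:ℝ) ≠ 1)]; exact hx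
    exact hcl this
  set W : ℝ → ℝ := fun x => deriv w x * Real.sin (π * x) - w x * (π * Real.cos (π * x)) with hWdef
  have hW : ∀ x : ℝ, HasDerivAt W
      ((deriv (deriv w) x + π ^ 2 * w x) * Real.sin (π * x)) x := by
    intro x
    have p1 : HasDerivAt (fun x => deriv w x * Real.sin (π * x))
        (deriv (deriv w) x * Real.sin (π * x) + deriv w x * (π * Real.cos (π * x))) x :=
      ((hwd' x).hasDerivAt).mul (hds x)
    have p2 : HasDerivAt (fun x => w x * (π * Real.cos (π * x)))
        (deriv w x * (π * Real.cos (π * x)) + w x * (π * -(π * Real.sin (π * x)))) x :=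
      ((hwd x).hasDerivAt).mul ((hdc x).const_mul π)
    have := p1.sub p2
    refine this.congr_deriv ?_
    ring
  have hkey : (∫ x in (0:ℝ)..1, -(ν * Real.sin (π * x) ^ 2)) = W 1 - W 0 := by
    apply integral_eq_sub_of_hasDerivAt
    · intro x hx
      rw [uIcc_of_le (by norm_num : (0:ℝ) ≤ 1)] at hx
      have h := hodeI x hx
      have := hW x
      refine this.congr_deriv ?_
      linear_combination (Real.sin (π * x)) * h
    · apply Continuous.intervalIntegrable
      fun_prop
  have hnu : ν = 0 := by
    have hW1 : W 1 = 0 := by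
      simp [hWdef, h1, Real.sin_pi, mul_one]
    have hW0 : W 0 = 0 := by
      simp [hWdef, h0]
    rw [hW1, hW0] at hkey
    have : (∫ x in (0:ℝ)..1, -(ν * Real.sin (π * x) ^ 2)) = -ν * (1/2) := by
      have : (∫ x in (0:ℝ)..1, -(ν * Real.sin (π * x) ^ 2))
          = ∫ x in (0:ℝ)..1, (-ν) * Real.sin (π * x) ^ 2 := by
        congr 1; ext x; ring
      rw [this, intervalIntegral.integral_const_mul, int_sin_sq]
    rw [this] at hkey
    linarith
  subst hnu
  refine ⟨rfl, ?_⟩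
  have hode0 : ∀ x ∈ Icc (0:ℝ) 1, deriv (deriv w) x + π ^ 2 * w x = 0 := by
    intro x hx
    have := hodeI x hx
    simpa using this
  have hsub : ∀ x ∈ Icc (0:ℝ) 1, uIcc (0:ℝ) x ⊆ Icc (0:ℝ) 1 := by
    intro x hx
    rw [uIcc_of_le hx.1]
    exact Icc_subset_Icc le_rfl hx.2
  set U : ℝ → ℝ := fun x => deriv w x * Real.cos (π * x) + π * (w x * Real.sin (π * x)) with hUdef
  have hU : ∀ x : ℝ, HasDerivAt U
      ((deriv (deriv w) x + π ^ 2 * w x) * Real.cos (π * x)) x := by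
    intro x
    have p1 : HasDerivAt (fun x => deriv w x * Real.cos (π * x))
        (deriv (deriv w) x * Real.cos (π * x) + deriv w x * -(π * Real.sin (π * x))) x :=
      ((hwd' x).hasDerivAt).mul (hdc x)
    have p2 : HasDerivAt (fun x => w x * Real.sin (π * x))
        (deriv w x * Real.sin (π * x) + w x * (π * Real.cos (π * x))) x :=
      ((hwd x).hasDerivAt).mul (hds x)
    have := p1.add (p2.const_mul π)
    refine this.congr_deriv ?_
    ring
  have hUconst : ∀ x ∈ Icc (0:ℝ) 1, U x = U 0 := by
    intro x hx
    have hz : (∫ t in (0:ℝ)..x, (0:ℝ)) = U x - U 0 := by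
      apply integral_eq_sub_of_hasDerivAt
      · intro t ht
        have hmem := hsub x hx ht
        have := hU t
        rw [(by rw [hode0 t hmem]; ring :
          ((deriv (deriv w) t + π ^ 2 * w t) * Real.cos (π * t)) = 0)] at this
        exact this
      · exact intervalIntegrable_const
    simp at hz
    linarith
  have hVconst : ∀ x ∈ Icc (0:ℝ) 1, W x = 0 := by
    intro x hx
    have hz : (∫ t in (0:ℝ)..x, (0:ℝ)) = W x - W 0 := by
      apply integral_eq_sub_of_hasDerivAt
      · intro t ht
        have hmem := hsub x hx ht
        have := hW t
        rw [(by rw [hode0 t hmem]; ring :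
          ((deriv (deriv w) t + π ^ 2 * w t) * Real.sin (π * t)) = 0)] at this
        exact this
      · exact intervalIntegrable_const
    have hW0 : W 0 = 0 := by simp [hWdef, h0]
    simp [hW0] at hz
    linarith
  set b : ℝ := deriv w 0 with hbdef
  have hU0 : U 0 = b := by simp [hUdef, hbdef, h0]
  have hderivw : ∀ x ∈ Icc (0:ℝ) 1, deriv w x = b * Real.cos (π * x) := by
    intro x hx
    have hu := hUconst x hx
    rw [hU0] at hu
    have hv := hVconst x hx
    have hs : Real.sin (π * x) ^ 2 + Real.cos (π * x) ^ 2 = 1 := Real.sin_sq_add_cos_sq _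
    simp only [hWdef, hUdef] at hu hv
    linear_combination (-(deriv w x)) * hs + Real.cos (π * x) * hu + Real.sin (π * x) * hv
  have hwval : ∀ x ∈ Icc (0:ℝ) 1, π * w x = b * Real.sin (π * x) := by
    intro x hx
    have hu := hUconst x hx
    rw [hU0] at hu
    have hv := hVconst x hx
    have hs : Real.sin (π * x) ^ 2 + Real.cos (π * x) ^ 2 = 1 := Real.sin_sq_add_cos_sq _
    simp only [hWdef, hUdef] at hu hv
    linear_combination (-(π * w x)) * hs + Real.sin (π * x) * hu - Real.cos (π * x) * hv
  have hb : b = 0 := by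
    have hcong : (∫ x in (0:ℝ)..1, (π * Real.cos (π * x)) * deriv w x)
        = ∫ x in (0:ℝ)..1, (π * b) * Real.cos (π * x) ^ 2 := by
      apply intervalIntegral.integral_congr
      intro x hx
      rw [uIcc_of_le (by norm_num : (0:ℝ) ≤ 1)] at hx
      simp only
      rw [hderivw x hx]
      ring
    rw [hcong, intervalIntegral.integral_const_mul, int_cos_sq] at hint
    have hπ : π > 0 := Real.pi_pos
    nlinarith [hint]
  intro x hx
  have := hwval x hx
  rw [hb] at this
  have hπ : π ≠ 0 := Real.pi_ne_zero
  simp at this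
  linarith [this]

noncomputable def G1 (g : ℝ → ℝ) (x : ℝ) : ℝ := ∫ t in (0:ℝ)..x, g t * Real.cos (π * t)
noncomputable def G2 (g : ℝ → ℝ) (x : ℝ) : ℝ := ∫ t in (0:ℝ)..x, g t * Real.sin (π * t)

noncomputable def sol (g : ℝ → ℝ) (c : ℝ) (x : ℝ) : ℝ :=
  (1 / π) * (Real.sin (π * x) * G1 g x - Real.cos (π * x) * G2 g x) + c * Real.sin (π * x)

noncomputable def sol' (g : ℝ → ℝ) (c : ℝ) (x : ℝ) : ℝ :=
  Real.cos (π * x) * G1 g x + Real.sin (π * x) * G2 g x + c * (π * Real.cos (π * x))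

variable {g : ℝ → ℝ}

lemma hG1 (hg : Continuous g) (x : ℝ) : HasDerivAt (G1 g) (g x * Real.cos (π * x)) x :=
  ftc1 (hg.mul cont_cos) x

lemma hG2 (hg : Continuous g) (x : ℝ) : HasDerivAt (G2 g) (g x * Real.sin (π * x)) x :=
  ftc1 (hg.mul cont_sin) x

lemma contG1 (hg : Continuous g) : Continuous (G1 g) :=
  continuous_iff_continuousAt.mpr fun x => (hG1 hg x).continuousAt

lemma contG2 (hg : Continuous g) : Continuous (G2 g) :=
  continuous_iff_continuousAt.mpr fun x => (hG2 hg x).continuousAt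

lemma hasDerivAt_sol (hg : Continuous g) (c : ℝ) (x : ℝ) :
    HasDerivAt (sol g c) (sol' g c x) x := by
  have p1 : HasDerivAt (fun x => Real.sin (π * x) * G1 g x)
      (π * Real.cos (π * x) * G1 g x + Real.sin (π * x) * (g x * Real.cos (π * x))) x :=
    (hds x).mul (hG1 hg x)
  have p2 : HasDerivAt (fun x => Real.cos (π * x) * G2 g x)
      (-(π * Real.sin (π * x)) * G2 g x + Real.cos (π * x) * (g x * Real.sin (π * x))) x :=
    (hdc x).mul (hG2 hg x)
  have p3 := ((p1.sub p2).const_mul (1 / π)).add ((hds x).const_mul c)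
  have hπ : π ≠ 0 := Real.pi_ne_zero
  refine p3.congr_deriv ?_
  unfold sol'
  field_simp
  ring

lemma hasDerivAt_sol' (hg : Continuous g) (c : ℝ) (x : ℝ) :
    HasDerivAt (sol' g c) (g x - π ^ 2 * sol g c x) x := by
  have p1 : HasDerivAt (fun x => Real.cos (π * x) * G1 g x)
      (-(π * Real.sin (π * x)) * G1 g x + Real.cos (π * x) * (g x * Real.cos (π * x))) x :=
    (hdc x).mul (hG1 hg x)
  have p2 : HasDerivAt (fun x => Real.sin (π * x) * G2 g x)
      (π * Real.cos (π * x) * G2 g x + Real.sin (π * x) * (g x * Real.sin (π * x))) x :=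
    (hds x).mul (hG2 hg x)
  have p3 := (p1.add p2).add (((hdc x).const_mul π).const_mul c)
  have hπ : π ≠ 0 := Real.pi_ne_zero
  have hsc : Real.sin (π * x) ^ 2 + Real.cos (π * x) ^ 2 = 1 := Real.sin_sq_add_cos_sq _
  refine p3.congr_deriv ?_
  unfold sol
  field_simp
  linear_combination g x * hsc

lemma deriv_sol (hg : Continuous g) (c : ℝ) : deriv (sol g c) = sol' g c :=
  funext fun x => (hasDerivAt_sol hg c x).deriv

lemma cont_sol (hg : Continuous g) (c : ℝ) : Continuous (sol g c) :=
  (continuous_const.mul ((cont_sin.mul (contG1 hg)).sub (cont_cos.mul (contG2 hg)))).add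
    (continuous_const.mul cont_sin)

lemma contDiff_sol (hg : Continuous g) (c : ℝ) : ContDiff ℝ 2 (sol g c) := by
  have hd1 : Differentiable ℝ (sol g c) := fun x => (hasDerivAt_sol hg c x).differentiableAt
  have hd2 : Differentiable ℝ (sol' g c) := fun x => (hasDerivAt_sol' hg c x).differentiableAt
  have hder2 : deriv (sol' g c) = fun x => g x - π ^ 2 * sol g c x :=
    funext fun x => (hasDerivAt_sol' hg c x).deriv
  have hc2 : Continuous (deriv (sol' g c)) := by
    rw [hder2]; exact hg.sub (continuous_const.mul (cont_sol hg c))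
  have key : ContDiff ℝ ((1 : ℕ) + 1) (sol g c) := by
    apply contDiff_succ_iff_deriv.mpr
    refine ⟨hd1, by simp, ?_⟩
    rw [deriv_sol hg c]
    exact contDiff_one_iff_deriv.mpr ⟨hd2, hc2⟩
  exact_mod_cast key

lemma sol_zero (c : ℝ) : sol g c 0 = 0 := by
  simp [sol, G1, G2]

lemma sol_one (c : ℝ) (hzero : (∫ t in (0:ℝ)..1, g t * Real.sin (π * t)) = 0) :
    sol g c 1 = 0 := by
  simp [sol, G2, mul_one, Real.sin_pi, Real.cos_pi, hzero]

end S13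

open S13 in
/-- The linearization `L(u,μ) = (u'' + π²u + μ sin(πx), ⟨(sin(π·))', u'⟩)`
at the first eigenpair is bijective: for every datum `(f, a)` there exists a solution
`(u, μ)`, and it is unique (as a function on `[0,1]`). -/
theorem stmt13 (f : ℝ → ℝ) (hf : ContinuousOn f (Icc 0 1)) (a : ℝ) :
    (∃ u : ℝ → ℝ, ∃ μ : ℝ, ContDiff ℝ 2 u ∧ u 0 = 0 ∧ u 1 = 0 ∧
      (∀ x ∈ Ioo (0:ℝ) 1,
        deriv (deriv u) x + π ^ 2 * u x + μ * Real.sin (π * x) = f x) ∧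
      (∫ x in (0:ℝ)..1, deriv (fun y => Real.sin (π * y)) x * deriv u x) = a) ∧
    (∀ u₁ u₂ : ℝ → ℝ, ∀ μ₁ μ₂ : ℝ,
      (ContDiff ℝ 2 u₁ ∧ u₁ 0 = 0 ∧ u₁ 1 = 0 ∧
        (∀ x ∈ Ioo (0:ℝ) 1,
          deriv (deriv u₁) x + π ^ 2 * u₁ x + μ₁ * Real.sin (π * x) = f x) ∧
        (∫ x in (0:ℝ)..1, deriv (fun y => Real.sin (π * y)) x * deriv u₁ x) = a) →
      (ContDiff ℝ 2 u₂ ∧ u₂ 0 = 0 ∧ u₂ 1 = 0 ∧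
        (∀ x ∈ Ioo (0:ℝ) 1,
          deriv (deriv u₂) x + π ^ 2 * u₂ x + μ₂ * Real.sin (π * x) = f x) ∧
        (∫ x in (0:ℝ)..1, deriv (fun y => Real.sin (π * y)) x * deriv u₂ x) = a) →
      μ₁ = μ₂ ∧ ∀ x ∈ Icc (0:ℝ) 1, u₁ x = u₂ x) := by
  have hπ : π ≠ 0 := Real.pi_ne_zero
  constructor
  · -- Existence
    set F : ℝ → ℝ := fun x => f (min 1 (max 0 x)) with hFdef
    have hFc : Continuous F := by
      apply hf.comp_continuous (by fun_prop)
      intro x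
      exact ⟨le_min zero_le_one (le_max_left 0 x), min_le_left _ _⟩
    have hFeq : ∀ x ∈ Icc (0:ℝ) 1, F x = f x := by
      intro x hx
      simp only [hFdef]
      rw [max_eq_right hx.1, min_eq_right hx.2]
    set μ : ℝ := 2 * ∫ t in (0:ℝ)..1, F t * Real.sin (π * t) with hμdef
    set g : ℝ → ℝ := fun t => F t - μ * Real.sin (π * t) with hgdef
    have hgc : Continuous g := hFc.sub (continuous_const.mul cont_sin)
    have hzero : (∫ t in (0:ℝ)..1, g t * Real.sin (π * t)) = 0 := by
      have hsplit : (∫ t in (0:ℝ)..1, g t * Real.sin (π * t))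
          = (∫ t in (0:ℝ)..1, F t * Real.sin (π * t))
            - μ * ∫ t in (0:ℝ)..1, Real.sin (π * t) ^ 2 := by
        rw [← intervalIntegral.integral_const_mul, ← intervalIntegral.integral_sub
          (show IntervalIntegrable (fun t => F t * Real.sin (π * t)) volume 0 1 from
            (hFc.mul cont_sin).intervalIntegrable 0 1)
          (show IntervalIntegrable (fun t => μ * Real.sin (π * t) ^ 2) volume 0 1 from
            (continuous_const.mul (cont_sin.pow 2)).intervalIntegrable 0 1)]
        congr 1
        ext t
        simp only [hgdef]
        ring
      rw [hsplit, int_sin_sq, hμdef]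
      ring
    set K : ℝ := ∫ x in (0:ℝ)..1,
      (π * Real.cos (π * x)) * (Real.cos (π * x) * G1 g x + Real.sin (π * x) * G2 g x) with hKdef
    set c : ℝ := (a - K) * (2 / π ^ 2) with hcdef
    refine ⟨sol g c, μ, contDiff_sol hgc c, sol_zero c, sol_one c hzero, ?_, ?_⟩
    · intro x hx
      have hdd : deriv (deriv (sol g c)) x = g x - π ^ 2 * sol g c x := by
        rw [deriv_sol hgc c]
        exact (hasDerivAt_sol' hgc c x).deriv
      rw [hdd]
      have := hFeq x (Ioo_subset_Icc_self hx)
      simp only [hgdef]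
      linarith [this]
    · rw [deriv_sol hgc c]
      have hsplit : (∫ x in (0:ℝ)..1, deriv (fun y => Real.sin (π * y)) x * sol' g c x)
          = (∫ x in (0:ℝ)..1,
              (π * Real.cos (π * x)) * (Real.cos (π * x) * G1 g x + Real.sin (π * x) * G2 g x))
            + (c * π ^ 2) * ∫ x in (0:ℝ)..1, Real.cos (π * x) ^ 2 := by
        rw [← intervalIntegral.integral_const_mul, ← intervalIntegral.integral_add
          (show IntervalIntegrable (fun x => π * Real.cos (π * x) *
              (Real.cos (π * x) * G1 g x + Real.sin (π * x) * G2 g x)) volume 0 1 from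
            ((continuous_const.mul cont_cos).mul ((cont_cos.mul (contG1 hgc)).add
            (cont_sin.mul (contG2 hgc)))).intervalIntegrable 0 1)
          (show IntervalIntegrable (fun x => c * π ^ 2 * Real.cos (π * x) ^ 2) volume 0 1 from
            (continuous_const.mul (cont_cos.pow 2)).intervalIntegrable 0 1)]
        congr 1
        ext x
        simp only [deriv_sinpi]
        unfold sol'
        ring
      rw [hsplit, int_cos_sq, ← hKdef, hcdef]
      field_simp
      ring
  · -- Uniqueness
    rintro u₁ u₂ μ₁ μ₂ ⟨hc1, h01, h11, hode1, hint1⟩ ⟨hc2, h02, h12, hode2, hint2⟩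
    have hd1 : Differentiable ℝ u₁ := hc1.differentiable (by norm_num)
    have hd2 : Differentiable ℝ u₂ := hc2.differentiable (by norm_num)
    have hdd1 : Differentiable ℝ (deriv u₁) := by
      have h2 : ContDiff ℝ ((1 : ℕ) + 1) u₁ := by exact_mod_cast hc1
      exact ((contDiff_succ_iff_deriv.mp h2).2.2).differentiable (by norm_num)
    have hdd2 : Differentiable ℝ (deriv u₂) := by
      have h2 : ContDiff ℝ ((1 : ℕ) + 1) u₂ := by exact_mod_cast hc2
      exact ((contDiff_succ_iff_deriv.mp h2).2.2).differentiable (by norm_num)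
    set w : ℝ → ℝ := fun x => u₁ x - u₂ x with hwdef
    have hwsmooth : ContDiff ℝ 2 w := hc1.sub hc2
    have hdw : deriv w = fun x => deriv u₁ x - deriv u₂ x :=
      funext fun x => deriv_sub (hd1 x) (hd2 x)
    have hddw : ∀ x, deriv (deriv w) x = deriv (deriv u₁) x - deriv (deriv u₂) x := by
      intro x
      rw [hdw]
      exact deriv_sub (hdd1 x) (hdd2 x)
    have hodew : ∀ x ∈ Ioo (0:ℝ) 1,
        deriv (deriv w) x + π ^ 2 * w x + (μ₁ - μ₂) * Real.sin (π * x) = 0 := by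
      intro x hx
      have e1 := hode1 x hx
      have e2 := hode2 x hx
      rw [hddw x]
      simp only [hwdef]
      linarith [e1, e2]
    have hintw : (∫ x in (0:ℝ)..1, (π * Real.cos (π * x)) * deriv w x) = 0 := by
      have hsplit : (∫ x in (0:ℝ)..1, (π * Real.cos (π * x)) * deriv w x)
          = (∫ x in (0:ℝ)..1, (π * Real.cos (π * x)) * deriv u₁ x)
            - ∫ x in (0:ℝ)..1, (π * Real.cos (π * x)) * deriv u₂ x := by
        rw [← intervalIntegral.integral_sub
          (show IntervalIntegrable (fun x => π * Real.cos (π * x) * deriv u₁ x) volume 0 1 from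
            ((continuous_const.mul cont_cos).mul hdd1.continuous).intervalIntegrable 0 1)
          (show IntervalIntegrable (fun x => π * Real.cos (π * x) * deriv u₂ x) volume 0 1 from
            ((continuous_const.mul cont_cos).mul hdd2.continuous).intervalIntegrable 0 1)]
        congr 1
        ext x
        rw [hdw]
        ring
      simp only [deriv_sinpi] at hint1 hint2
      rw [hsplit, hint1, hint2]
      ring
    obtain ⟨hnu, hwz⟩ := uniq w (μ₁ - μ₂) hwsmooth (by simp [hwdef, h01, h02])
      (by simp [hwdef, h11, h12]) hodew hintw
    constructor
    · linarith [hnu]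
    · intro x hx
      have := hwz x hx
      simp only [hwdef] at this
      linarith [this]
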